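/- For every integer k ≥ 3, the instance I_k admits a multi-commodity flow over time with time horizon T = k+1 (intermediate storage permitted). Concretely, there exist integrable flow-rate functions f^i_j : ℝ → ℝ≥0 vanishing outside [0, k+1) that satisfy the capacity constraints, the (weak) flow conservation constraints, and the demand constraints of I_k with T = k+1. -/

import Mathlib

open MeasureTheory Set

/-- A multi-commodity flow over time with time horizon `T` for the cycle instance with `k` nodes
`v_0, …, v_{k-1}`, arcs `a_j = (v_j, v_{(j+1) % k})` of unit capacity and unit transit time,
`k` commodities where commodity `i` has source `v_i`, sink `v_{(i-1) % k}` and demand `d i`.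
`f i j` is the flow rate function of commodity `i` into arc `a_j`. -/
def IsMCFlow (k : ℕ) (T : ℝ) (d : ℕ → ℝ) (f : ℕ → ℕ → ℝ → ℝ) : Prop :=
  -- positive time horizon
  0 < T ∧
  -- integrable flow rate functions
  (∀ i < k, ∀ j < k, Integrable (f i j)) ∧
  -- nonnegative flow rates
  (∀ i < k, ∀ j < k, ∀ θ : ℝ, 0 ≤ f i j θ) ∧
  -- flow rates vanish outside [0, T)
  (∀ i < k, ∀ j < k, ∀ θ : ℝ, θ ∉ Ico (0 : ℝ) T → f i j θ = 0) ∧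
  -- capacity constraints, for almost every time
  (∀ j < k, ∀ᵐ θ : ℝ, ∑ i ∈ Finset.range k, f i j θ ≤ 1) ∧
  -- weak flow conservation: flow can only emerge from the source `v_i` of commodity `i`;
  -- node `v_m` has unique incoming arc `a_{(m-1) % k}` and unique outgoing arc `a_m`
  (∀ i < k, ∀ m < k, m ≠ i → ∀ θ ∈ Ico (0 : ℝ) T,
    0 ≤ (∫ ξ in (0 : ℝ)..(θ - 1), f i ((m + k - 1) % k) ξ) -
        ∫ ξ in (0 : ℝ)..θ, f i m ξ) ∧
  -- demands are fulfilled at time `T`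
  (∀ i < k, ∀ m < k,
    (∫ ξ in (0 : ℝ)..(T - 1), f i ((m + k - 1) % k) ξ) -
        (∫ ξ in (0 : ℝ)..T, f i m ξ) =
      if m = (i + k - 1) % k then d i
      else if m = i then -d i
      else 0)

/-- The flow is without intermediate storage: flow conservation holds with equality at every
node other than the source `v_i` and the sink `v_{(i-1) % k}` of each commodity `i`. -/
def NoStorage (k : ℕ) (T : ℝ) (f : ℕ → ℕ → ℝ → ℝ) : Prop :=
  ∀ i < k, ∀ m < k, m ≠ i → m ≠ (i + k - 1) % k → ∀ θ ∈ Ico (0 : ℝ) T,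
    (∫ ξ in (0 : ℝ)..(θ - 1), f i ((m + k - 1) % k) ξ) =
      ∫ ξ in (0 : ℝ)..θ, f i m ξ

/-- The demands of the instance `I_k`: commodity `0` has demand `2`,
all other commodities have demand `1`. -/
noncomputable def demandI (i : ℕ) : ℝ := if i = 0 then 2 else 1

noncomputable def stR (k i j : ℕ) : ℝ :=
  if i ≤ j then (j : ℝ) - i else (j : ℝ) - i + (k + 1)

noncomputable def lnR (i : ℕ) : ℝ := if i = 0 then 2 else 1

noncomputable def fI (k i j : ℕ) : ℝ → ℝ :=
  if (j + 1) % k = i then 0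
  else (Ico (stR k i j) (stR k i j + lnR i)).indicator (fun _ => (1 : ℝ))

lemma st_nonneg {k i j : ℕ} (hi : i < k) : 0 ≤ stR k i j := by
  unfold stR; split_ifs with h
  · have : (i:ℝ) ≤ j := by exact_mod_cast h
    linarith
  · have h1 : (i:ℝ) < k := by exact_mod_cast hi
    have h2 : (0:ℝ) ≤ j := Nat.cast_nonneg j
    linarith

lemma ln_pos (i : ℕ) : 0 < lnR i := by unfold lnR; split_ifs <;> norm_num

lemma st_add_ln_le {k i j : ℕ} (hj : j < k) : stR k i j + lnR i ≤ (k:ℝ) + 1 := by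
  have hjk : (j:ℝ) + 1 ≤ k := by exact_mod_cast Nat.succ_le_of_lt hj
  unfold stR lnR; split_ifs with h h0 h0
  · subst h0
    simp only [Nat.cast_zero, sub_zero]
    linarith
  · have : (1:ℝ) ≤ i := by exact_mod_cast Nat.one_le_iff_ne_zero.2 h0
    linarith
  · omega
  · have h' : j < i := Nat.lt_of_not_le h
    have : (j:ℝ) + 1 ≤ i := by exact_mod_cast h'
    linarith

lemma skip_unfold {k i j : ℕ} (hj : j < k) (hi : i < k) (h : ¬ (j + 1) % k = i) :
    ¬ (j + 1 = k ∧ i = 0) ∧ ¬ (j + 1 < k ∧ j + 1 = i) := by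
  rcases Nat.lt_or_ge (j+1) k with h1 | h1
  · rw [Nat.mod_eq_of_lt h1] at h; omega
  · have : j + 1 = k := by omega
    rw [this, Nat.mod_self] at h; omega

lemma st_add_ln_le_k {k i j : ℕ} (hj : j < k) (hi : i < k)
    (h : ¬ (j + 1) % k = i) : stR k i j + lnR i ≤ (k:ℝ) := by
  obtain ⟨h1, h2⟩ := skip_unfold hj hi h
  unfold stR lnR; split_ifs with hij h0 h0
  · subst h0
    have : j + 2 ≤ k := by omega
    have : ((j:ℝ)) + 2 ≤ k := by exact_mod_cast this
    simp only [Nat.cast_zero, sub_zero]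
    linarith
  · have hi1 : (1:ℝ) ≤ i := by exact_mod_cast Nat.one_le_iff_ne_zero.2 h0
    have : (j:ℝ) < k := by exact_mod_cast hj
    linarith
  · omega
  · have h' : j + 2 ≤ i := by omega
    have : (j:ℝ) + 2 ≤ i := by exact_mod_cast h'
    linarith

lemma myIndInt (b c : ℝ) (hb : 0 ≤ b) (hbc : b ≤ c) (a : ℝ) :
    ∫ ξ in (0:ℝ)..a, (Ico b c).indicator (fun _ => (1:ℝ)) ξ = max (min a c - b) 0 := by
  rcases le_total a 0 with ha | ha
  · rw [intervalIntegral.integral_of_ge ha,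
      setIntegral_indicator measurableSet_Ico]
    have hz : volume (Ioc a 0 ∩ Ico b c) = 0 := by
      have hsub : Ioc a 0 ∩ Ico b c ⊆ Icc 0 0 := by
        rintro x ⟨⟨h3, h4⟩, h1, h2⟩
        exact ⟨le_trans hb h1, h4⟩
      exact measure_mono_null hsub (by simp)
    rw [Measure.restrict_eq_zero.2 hz]
    simp only [integral_zero_measure, neg_zero]
    rw [min_eq_left (le_trans ha (le_trans hb hbc)), max_eq_right (by linarith)]
  · rw [intervalIntegral.integral_of_le ha,
      setIntegral_indicator measurableSet_Ico, setIntegral_const, smul_eq_mul, mul_one]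
    rcases le_total (min a c) b with h | h
    · have hz : volume (Ioc 0 a ∩ Ico b c) = 0 := by
        have hsub : Ioc 0 a ∩ Ico b c ⊆ Icc b (min a c) := by
          rintro x ⟨⟨h3, h4⟩, h1, h2⟩
          exact ⟨h1, le_min h4 h2.le⟩
        refine measure_mono_null hsub ?_
        rw [Real.volume_Icc]
        exact ENNReal.ofReal_eq_zero.2 (by linarith)
      rw [measureReal_def, hz]
      simp [max_eq_right (by linarith : min a c - b ≤ 0)]
    · have hv : volume (Ioc 0 a ∩ Ico b c) = ENNReal.ofReal (min a c - b) := by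
        apply le_antisymm
        · calc volume (Ioc 0 a ∩ Ico b c) ≤ volume (Icc b (min a c)) := by
                apply measure_mono
                rintro x ⟨⟨h3, h4⟩, h1, h2⟩
                exact ⟨h1, le_min h4 h2.le⟩
            _ = ENNReal.ofReal (min a c - b) := Real.volume_Icc
        · calc ENNReal.ofReal (min a c - b) = volume (Ioo b (min a c)) :=
                (Real.volume_Ioo).symm
            _ ≤ volume (Ioc 0 a ∩ Ico b c) := by
                apply measure_mono
                rintro x ⟨h1, h2⟩
                exact ⟨⟨lt_of_le_of_lt hb h1, le_trans h2.le (min_le_left a c)⟩,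
                  h1.le, lt_of_lt_of_le h2 (min_le_right a c)⟩
      rw [measureReal_def, hv, ENNReal.toReal_ofReal (by linarith), max_eq_left (by linarith)]

lemma int_fI {k i j : ℕ} (hi : i < k) (a : ℝ) :
    ∫ ξ in (0:ℝ)..a, fI k i j ξ =
      if (j + 1) % k = i then 0
      else max (min a (stR k i j + lnR i) - stR k i j) 0 := by
  unfold fI; split_ifs with h
  · simp
  · exact myIndInt _ _ (st_nonneg hi) (by have := ln_pos i; linarith) a

lemma stR_cast (k i j : ℕ) :
    stR k i j = ((if i ≤ j then (j:ℤ) - i else (j:ℤ) - i + (k+1) : ℤ) : ℝ) := by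
  unfold stR; split_ifs <;> push_cast <;> ring

lemma lnR_cast (i : ℕ) : lnR i = ((if i = 0 then (2:ℤ) else 1 : ℤ) : ℝ) := by
  unfold lnR; split_ifs <;> norm_num

lemma mem_of_fI_ne {k i j : ℕ} {θ : ℝ} (h : fI k i j θ ≠ 0) :
    ¬ (j + 1) % k = i ∧ stR k i j ≤ θ ∧ θ < stR k i j + lnR i := by
  unfold fI at h
  split_ifs at h with hs
  · simp at h
  · have hmem : θ ∈ Ico (stR k i j) (stR k i j + lnR i) := by
      by_contra hx
      exact h (Set.indicator_of_notMem hx _)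
    exact ⟨hs, hmem.1, hmem.2⟩

lemma fI_disj {k j i i' : ℕ} (hi : i < k) (hi' : i' < k)
    {θ : ℝ} (h1 : fI k i j θ ≠ 0) (h2 : fI k i' j θ ≠ 0) : i = i' := by
  obtain ⟨hs1, ha1, hb1⟩ := mem_of_fI_ne h1
  obtain ⟨hs2, ha2, hb2⟩ := mem_of_fI_ne h2
  have c1 : stR k i j < stR k i' j + lnR i' := lt_of_le_of_lt ha1 hb2
  have c2 : stR k i' j < stR k i j + lnR i := lt_of_le_of_lt ha2 hb1
  rw [stR_cast k i j, stR_cast k i' j, lnR_cast, ← Int.cast_add, Int.cast_lt] at c1 c2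
  split_ifs at c1 c2 <;> omega

lemma fI_nonneg (k i j : ℕ) (θ : ℝ) : 0 ≤ fI k i j θ := by
  unfold fI; split_ifs
  · exact le_refl 0
  · exact Set.indicator_nonneg (fun _ _ => zero_le_one) θ

lemma fI_le_one (k i j : ℕ) (θ : ℝ) : fI k i j θ ≤ 1 := by
  unfold fI; split_ifs
  · exact zero_le_one
  · by_cases hm : θ ∈ Ico (stR k i j) (stR k i j + lnR i)
    · rw [Set.indicator_of_mem hm]
    · rw [Set.indicator_of_notMem hm]; exact zero_le_one

lemma fI_integrable (k i j : ℕ) : Integrable (fI k i j) := by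
  unfold fI; split_ifs
  · exact integrable_zero _ _ _
  · exact (integrable_indicator_iff measurableSet_Ico).2
      (integrableOn_const measure_Ico_lt_top.ne)

lemma prev_mod {k m : ℕ} (hk : 3 ≤ k) (hm : m < k) :
    (m + k - 1) % k = if m = 0 then k - 1 else m - 1 := by
  split_ifs with h
  · subst h
    simpa using Nat.mod_eq_of_lt (by omega : k - 1 < k)
  · have he : m + k - 1 = (m - 1) + k := by omega
    rw [he, Nat.add_mod_right, Nat.mod_eq_of_lt (by omega)]

lemma prev_succ_mod {k m : ℕ} (hk : 3 ≤ k) (hm : m < k) :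
    ((m + k - 1) % k + 1) % k = m := by
  rw [prev_mod hk hm]
  split_ifs with h
  · subst h
    rw [Nat.sub_add_cancel (by omega), Nat.mod_self]
  · rw [Nat.sub_add_cancel (by omega), Nat.mod_eq_of_lt hm]

lemma st_succ {k i m : ℕ} (hk : 3 ≤ k) (hi : i < k) (hm : m < k) (hne : m ≠ i) :
    stR k i ((m + k - 1) % k) + 1 ≤ stR k i m := by
  rw [prev_mod hk hm, stR_cast, stR_cast]
  have key : (if i ≤ (if m = 0 then k - 1 else m - 1)
        then (((if m = 0 then k - 1 else m - 1 : ℕ)):ℤ) - i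
        else (((if m = 0 then k - 1 else m - 1 : ℕ)):ℤ) - i + (k+1)) + 1 ≤
      (if i ≤ m then (m:ℤ) - i else (m:ℤ) - i + (k+1)) := by
    split_ifs <;> omega
  have key2 := (@Int.cast_le ℝ _ _ _).mpr key
  rw [Int.cast_add, Int.cast_one] at key2
  exact key2

lemma succ_mod_iff {k i m : ℕ} (hk : 3 ≤ k) (hi : i < k) (hm : m < k) :
    (m + 1) % k = i ↔ m = (i + k - 1) % k := by
  have u1 : (m + 1) % k = if m + 1 = k then 0 else m + 1 := by
    split_ifs with h
    · rw [h, Nat.mod_self]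
    · exact Nat.mod_eq_of_lt (by omega)
  have u2 : (i + k - 1) % k = if i = 0 then k - 1 else i - 1 := prev_mod hk hi
  rw [u1, u2]
  split_ifs <;> omega
/-- For every `k ≥ 3`, the instance `I_k` admits a multi-commodity flow over time
(with intermediate storage permitted) with time horizon `T = k + 1`. -/
theorem exists_flow_with_storage_horizon_k_add_one (k : ℕ) (hk : 3 ≤ k) :
    ∃ f : ℕ → ℕ → ℝ → ℝ, IsMCFlow k ((k : ℝ) + 1) demandI f := by
  refine ⟨fI k, ?_, ?_, ?_, ?_, ?_, ?_, ?_⟩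
  · positivity
  · intro i _ j _; exact fI_integrable k i j
  · intro i _ j _ θ; exact fI_nonneg k i j θ
  · intro i hi j hj θ hθ
    unfold fI; split_ifs with h
    · rfl
    · exact Set.indicator_of_notMem
        (fun hm => hθ ⟨le_trans (st_nonneg hi) hm.1,
          lt_of_lt_of_le hm.2 (st_add_ln_le hj)⟩) _
  · intro j hj
    refine Filter.Eventually.of_forall (fun θ => ?_)
    by_cases hex : ∃ i0 ∈ Finset.range k, fI k i0 j θ ≠ 0
    · obtain ⟨i0, hmem0, hne0⟩ := hex
      rw [Finset.sum_eq_single_of_mem i0 hmem0 (fun b hb hbne => by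
        by_contra hb0
        exact hbne (fI_disj (Finset.mem_range.1 hb) (Finset.mem_range.1 hmem0) hb0 hne0))]
      exact fI_le_one k i0 j θ
    · push_neg at hex
      rw [Finset.sum_eq_zero hex]
      exact zero_le_one
  · intro i hi m hm hne θ hθ
    rw [int_fI hi, int_fI hi]
    have hpm : ((m + k - 1) % k + 1) % k = m := prev_succ_mod hk hm
    by_cases h2 : (m + 1) % k = i
    · rw [if_pos h2]
      split_ifs with h3
      · simp
      · have := le_max_right
          (min (θ-1) (stR k i ((m+k-1)%k) + lnR i) - stR k i ((m+k-1)%k)) (0:ℝ)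
        linarith
    · have hps : ¬ ((m + k - 1) % k + 1) % k = i := by rw [hpm]; exact fun h => hne h
      rw [if_neg h2, if_neg hps]
      have hst : stR k i ((m+k-1)%k) + 1 ≤ stR k i m := st_succ hk hi hm hne
      set S := stR k i ((m+k-1)%k)
      set S' := stR k i m
      set L := lnR i
      have key : min θ (S' + L) - S' ≤ min (θ - 1) (S + L) - S := by
        simp only [min_def]; split_ifs <;> linarith
      have h4 : max (min θ (S'+L) - S') 0 ≤ max (min (θ-1) (S+L) - S) 0 :=
        max_le (le_max_of_le_left key) (le_max_right _ _)
      linarith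
  · intro i hi m hm
    have hT1 : ((k:ℝ) + 1) - 1 = (k:ℝ) := by ring
    rw [hT1]
    set p := (m + k - 1) % k with hp
    have hpk : p < k := Nat.mod_lt _ (by omega)
    have hpm : (p + 1) % k = m := prev_succ_mod hk hm
    have e1 : ∫ ξ in (0:ℝ)..(k:ℝ), fI k i p ξ = if m = i then 0 else lnR i := by
      rw [int_fI hi, ← hpm]
      split_ifs with hs
      · rfl
      · rw [min_eq_right (st_add_ln_le_k hpk hi hs), add_sub_cancel_left,
          max_eq_left (ln_pos i).le]
    have e2 : ∫ ξ in (0:ℝ)..((k:ℝ)+1), fI k i m ξ = if (m+1)%k = i then 0 else lnR i := by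
      rw [int_fI hi]
      split_ifs with hs
      · rfl
      · rw [min_eq_right (st_add_ln_le hm), add_sub_cancel_left,
          max_eq_left (ln_pos i).le]
    rw [e1, e2]
    have hiff : ((m+1)%k = i) ↔ (m = (i + k - 1) % k) := succ_mod_iff hk hi hm
    have hL : lnR i = demandI i := rfl
    by_cases h1 : m = i
    · have hm2 : ¬ (m+1)%k = i := by
        intro h
        have h' := hiff.1 h
        have hpi := prev_mod hk hi
        rw [hpi] at h'
        split_ifs at h' <;> omega
      have hm3 : ¬ m = (i+k-1)%k := fun h => hm2 (hiff.2 h)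
      rw [if_pos h1, if_neg hm2, if_neg hm3, if_pos h1, hL]; ring
    · rw [if_neg h1]
      by_cases h2 : (m+1)%k = i
      · rw [if_pos h2, if_pos (hiff.1 h2), hL]; ring
      · rw [if_neg h2, if_neg (fun h => h2 (hiff.2 h)), if_neg h1]; ring
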